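/- arXiv:1701.05990 — 2 statements merged into one kernel-verified Lean document; each statement's English description precedes it below -/
import Mathlib

section
/- Let K be a field of characteristic zero and A a unital K-algebra such that every K-subalgebra of A generated by finitely many elements is finite dimensional over K. Let φ be a locally finite surjective K-algebra endomorphism of A. Then the image of I − φ is a Mathieu subspace of A. -/
open LinearMap

lemma fitting_aux {K V : Type*} [Field K] [AddCommGroup V] [Module K V]
    [FiniteDimensional K V] (g : V →ₗ[K] V) :
    ∃ N : ℕ, 1 ≤ N ∧ IsCompl (LinearMap.ker (g ^ N)) (LinearMap.range (g ^ N)) := by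
  obtain ⟨N, h1, h2⟩ := (g.eventually_isCompl_ker_pow_range_pow.and
    (Filter.eventually_ge_atTop 1)).exists
  exact ⟨N, h2, h1⟩

lemma idem_trace_zero {K V : Type*} [Field K] [CharZero K] [AddCommGroup V] [Module K V]
    [FiniteDimensional K V] (f : V →ₗ[K] V) (hf : f ∘ₗ f = f)
    (htr : LinearMap.trace K V f = 0) : f = 0 := by
  obtain ⟨p, hp⟩ := (LinearMap.isProj_iff_isIdempotentElem f).mpr hf
  have h0 := hp.trace
  rw [htr] at h0
  have hp0 : Module.finrank K p = 0 := by exact_mod_cast h0.symm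
  have hbot : p = ⊥ := Submodule.finrank_eq_zero.mp hp0
  ext x
  have hm := hp.map_mem x
  rw [hbot, Submodule.mem_bot] at hm
  simpa using hm

/-- If `y - ψ y` is idempotent in a finite-dimensional algebra (char 0), then it is
killed by some iterate of `ψ`. -/
lemma idem_image_nilpotent {K B : Type*} [Field K] [CharZero K] [Ring B] [Algebra K B]
    [FiniteDimensional K B] (ψ : B →ₐ[K] B) (y : B)
    (he : (y - ψ y) * (y - ψ y) = y - ψ y) :
    ∃ N : ℕ, ψ^[N] (y - ψ y) = 0 := by
  obtain ⟨N, hN1, hcompl⟩ := fitting_aux (ψ.toLinearMap)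
  set g := ψ.toLinearMap with hgdef
  have hpow : ∀ (n : ℕ) (x : B), (g ^ n) x = ψ^[n] x := by
    intro n x
    rw [Module.End.pow_apply]
    rfl
  have hkmem : ∀ x : B, x ∈ LinearMap.ker (g ^ N) ↔ ψ^[N] x = 0 := by
    intro x; rw [LinearMap.mem_ker, hpow]
  have hrmem : ∀ x : B, x ∈ LinearMap.range (g ^ N) ↔ ∃ w, ψ^[N] w = x := by
    intro x
    constructor
    · rintro ⟨w, rfl⟩; exact ⟨w, (hpow N w).symm⟩
    · rintro ⟨w, rfl⟩; exact ⟨w, hpow N w⟩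
  -- decompose y
  have hytop : y ∈ LinearMap.ker (g ^ N) ⊔ LinearMap.range (g ^ N) := by
    rw [hcompl.codisjoint.eq_top]; trivial
  obtain ⟨y₀, hy₀, y₁, hy₁, hsum⟩ := Submodule.mem_sup.mp hytop
  set e := y - ψ y with hedef
  set e₀ := y₀ - ψ y₀ with he₀def
  set f := y₁ - ψ y₁ with hfdef
  have hy₀k : ψ^[N] y₀ = 0 := (hkmem y₀).mp hy₀
  have he₀k : ψ^[N] e₀ = 0 := by
    rw [he₀def, iterate_map_sub, hy₀k, ← Function.iterate_succ_apply,
      Function.iterate_succ_apply', hy₀k, map_zero, sub_zero]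
  have hef : e = e₀ + f := by
    rw [hedef, he₀def, hfdef, ← hsum, map_add]; abel
  have hfr : f ∈ LinearMap.range (g ^ N) := by
    obtain ⟨w, hw⟩ := (hrmem y₁).mp hy₁
    refine (hrmem f).mpr ⟨w - ψ w, ?_⟩
    rw [iterate_map_sub, hw, ← Function.iterate_succ_apply, Function.iterate_succ_apply', hw]
  -- f is idempotent
  have hNe : ψ^[N] e = ψ^[N] f := by rw [hef, iterate_map_add, he₀k, zero_add]
  have hff : f * f = f := by
    have hk : f * f - f ∈ LinearMap.ker (g ^ N) := by
      rw [hkmem, iterate_map_sub, iterate_map_mul, ← hNe, ← iterate_map_mul, he, sub_self]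
    have hr : f * f - f ∈ LinearMap.range (g ^ N) := by
      refine sub_mem ?_ hfr
      obtain ⟨w, hw⟩ := (hrmem f).mp hfr
      exact (hrmem _).mpr ⟨w * w, by rw [iterate_map_mul, hw]⟩
    have := Submodule.disjoint_def.mp hcompl.disjoint _ hk hr
    rwa [sub_eq_zero] at this
  -- trace argument on r := range (g ^ N)
  set r := LinearMap.range (g ^ N) with hrdef
  have hrmul : ∀ u v : B, u ∈ r → v ∈ r → u * v ∈ r := by
    intro u v hu hv
    obtain ⟨p, hp⟩ := (hrmem u).mp hu
    obtain ⟨q, hq⟩ := (hrmem v).mp hv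
    exact (hrmem _).mpr ⟨p * q, by rw [iterate_map_mul, hp, hq]⟩
  have hrψ : ∀ x ∈ r, g x ∈ r := by
    intro x hx
    obtain ⟨p, hp⟩ := (hrmem x).mp hx
    refine (hrmem _).mpr ⟨ψ p, ?_⟩
    show ψ^[N] (ψ p) = ψ x
    rw [← Function.iterate_succ_apply, Function.iterate_succ_apply', hp]
  set gr : r →ₗ[K] r := g.restrict hrψ with hgrdef
  have hgr_coe : ∀ x : r, (gr x : B) = ψ (x : B) := fun x => rfl
  have hinj : Function.Injective gr := by
    rw [← LinearMap.ker_eq_bot, Submodule.eq_bot_iff]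
    rintro ⟨x, hx⟩ hx0
    have hψx : ψ x = 0 := by
      have := congrArg (Subtype.val) hx0
      simpa [hgr_coe] using this
    have hxk : x ∈ LinearMap.ker (g ^ N) := by
      obtain ⟨M, rfl⟩ : ∃ M, N = M + 1 := ⟨N - 1, (Nat.succ_pred_eq_of_pos hN1).symm⟩
      rw [hkmem, Function.iterate_succ_apply, show ψ x = 0 from hψx, iterate_map_zero]
    have := Submodule.disjoint_def.mp hcompl.disjoint _ hxk hx
    exact Subtype.ext this
  have hbij : Function.Bijective gr := ⟨hinj, (LinearMap.injective_iff_surjective).mp hinj⟩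
  set E := LinearEquiv.ofBijective gr hbij with hEdef
  have hE_coe : ∀ x : r, (E x : B) = ψ (x : B) := fun x => rfl
  -- left multiplication operators
  have hLmem : ∀ (z : B), z ∈ r → ∀ x : B, x ∈ r → z * x ∈ r := fun z hz x hx => hrmul z x hz hx
  set Ly : r →ₗ[K] r := (LinearMap.mulLeft K y₁).restrict (hLmem y₁ hy₁) with hLydef
  set Lψ : r →ₗ[K] r := (LinearMap.mulLeft K (ψ y₁)).restrict (hLmem (ψ y₁) (hrψ y₁ hy₁))
    with hLψdef
  set Lf : r →ₗ[K] r := (LinearMap.mulLeft K f).restrict (hLmem f hfr) with hLfdef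
  have hconj : Lψ = E.conj Ly := by
    ext x
    rw [LinearEquiv.conj_apply_apply]
    show (ψ y₁) * (x : B) = (E (Ly (E.symm x)) : B)
    rw [hE_coe]
    show ψ y₁ * (x : B) = ψ (y₁ * ((E.symm x : r) : B))
    rw [map_mul]
    congr 1
    rw [← hE_coe, E.apply_symm_apply]
  have htrψ : LinearMap.trace K r Lψ = LinearMap.trace K r Ly := by
    rw [hconj, LinearMap.trace_conj']
  have hLsub : Lf = Ly - Lψ := by
    ext x
    show f * (x : B) = ((Ly x - Lψ x : r) : B)
    rw [hfdef, AddSubgroupClass.coe_sub]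
    show (y₁ - ψ y₁) * (x : B) = y₁ * (x : B) - ψ y₁ * (x : B)
    rw [sub_mul]
  have htrf : LinearMap.trace K r Lf = 0 := by
    have hms : LinearMap.trace K r (Ly - Lψ) =
        LinearMap.trace K r Ly - LinearMap.trace K r Lψ := (LinearMap.trace K _).map_sub Ly Lψ
    rw [hLsub, hms, htrψ, sub_self]
  have hLfidem : Lf ∘ₗ Lf = Lf := by
    ext x
    show f * (f * (x : B)) = f * (x : B)
    rw [← mul_assoc, hff]
  have hLf0 : Lf = 0 := idem_trace_zero Lf hLfidem htrf
  have h1r : (1 : B) ∈ r := (hrmem _).mpr ⟨1, iterate_map_one ψ N⟩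
  have hf0 : f = 0 := by
    have h := DFunLike.congr_fun hLf0 (⟨1, h1r⟩ : r)
    have h2 : f * 1 = (0 : B) := congrArg Subtype.val h
    rwa [mul_one] at h2
  refine ⟨N, ?_⟩
  show (⇑ψ)^[N] e = 0
  rw [hNe, hf0, iterate_map_zero]

/-- From finite-dimensionality of `K[a]`, produce the "invertible-part" idempotent of `a`. -/
lemma idem_from_powers {K A : Type*} [Field K] [Ring A] [Algebra K A] (a : A)
    (hfd : FiniteDimensional K (Algebra.adjoin K ({a} : Set A))) :
    ∃ d : ℕ, 1 ≤ d ∧ ∃ ε : A, ε * ε = ε ∧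
      ε ∈ Submodule.span K {x : A | ∃ m : ℕ, 1 ≤ m ∧ a ^ m = x} ∧
      ∀ m : ℕ, d ≤ m → a ^ m = a ^ m * ε := by
  haveI := hfd
  set B := Algebra.adjoin K ({a} : Set A) with hBdef
  set a' : B := ⟨a, Algebra.self_mem_adjoin_singleton K a⟩ with ha'def
  obtain ⟨N, hN1, hcompl⟩ := fitting_aux (LinearMap.mulLeft K a')
  rw [LinearMap.pow_mulLeft] at hcompl
  have hkmem : ∀ x : B, x ∈ LinearMap.ker (LinearMap.mulLeft K (a' ^ N)) ↔ a' ^ N * x = 0 := by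
    intro x; rw [LinearMap.mem_ker, LinearMap.mulLeft_apply]
  have hrmem : ∀ x : B, x ∈ LinearMap.range (LinearMap.mulLeft K (a' ^ N)) ↔
      ∃ s : B, a' ^ N * s = x := by
    intro x
    constructor
    · rintro ⟨s, rfl⟩; exact ⟨s, rfl⟩
    · rintro ⟨s, rfl⟩; exact ⟨s, rfl⟩
  have h1top : (1 : B) ∈ LinearMap.ker (LinearMap.mulLeft K (a' ^ N)) ⊔
      LinearMap.range (LinearMap.mulLeft K (a' ^ N)) := by
    rw [hcompl.codisjoint.eq_top]; trivial
  obtain ⟨n, hn, ε', hε', hsum⟩ := Submodule.mem_sup.mp h1top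
  have hnk : a' ^ N * n = 0 := (hkmem n).mp hn
  obtain ⟨s, hs⟩ := (hrmem ε').mp hε'
  -- everything in B commutes with a'
  have hcomm : ∀ x : B, a' ^ N * x = x * a' ^ N := by
    intro x
    apply Subtype.ext
    have hc : Commute a (x : A) := Algebra.commute_of_mem_adjoin_self x.2
    exact (hc.pow_left N).eq
  -- ε' * n = 0
  have hεn : ε' * n = 0 := by
    have hk : ε' * n ∈ LinearMap.ker (LinearMap.mulLeft K (a' ^ N)) := by
      rw [hkmem, ← mul_assoc, hcomm ε', mul_assoc, hnk, mul_zero]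
    have hr : ε' * n ∈ LinearMap.range (LinearMap.mulLeft K (a' ^ N)) := by
      rw [hrmem]
      exact ⟨s * n, by rw [← mul_assoc, hs]⟩
    exact Submodule.disjoint_def.mp hcompl.disjoint _ hk hr
  have hidem' : ε' * ε' = ε' := by
    calc ε' * ε' = ε' * n + ε' * ε' := by rw [hεn, zero_add]
    _ = ε' * (n + ε') := by rw [mul_add]
    _ = ε' := by rw [hsum, mul_one]
  have hpow' : ∀ m : ℕ, N ≤ m → a' ^ m = a' ^ m * ε' := by
    intro m hm
    have hmn : a' ^ m * n = 0 := by
      obtain ⟨j, rfl⟩ := Nat.exists_eq_add_of_le hm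
      rw [add_comm, pow_add, mul_assoc, hnk, mul_zero]
    calc a' ^ m = a' ^ m * (n + ε') := by rw [hsum, mul_one]
    _ = a' ^ m * n + a' ^ m * ε' := by rw [mul_add]
    _ = a' ^ m * ε' := by rw [hmn, zero_add]
  -- span membership
  have hs2 : (s : A) ∈ (Polynomial.aeval (R := K) a).range := by
    rw [← Algebra.adjoin_singleton_eq_range_aeval K a]; exact s.2
  obtain ⟨p, hp⟩ := hs2
  have hεval : (ε' : A) = a ^ N * Polynomial.aeval a p := by
    have h1 := congrArg (Subtype.val) hs
    push_cast at h1
    rw [← h1, ← hp]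
    rfl
  have hspan : (ε' : A) ∈ Submodule.span K {x : A | ∃ m : ℕ, 1 ≤ m ∧ a ^ m = x} := by
    rw [hεval, Polynomial.aeval_eq_sum_range, Finset.mul_sum]
    refine Submodule.sum_mem _ fun i _ => ?_
    rw [mul_smul_comm, ← pow_add]
    exact Submodule.smul_mem _ _ (Submodule.subset_span ⟨N + i, by omega, rfl⟩)
  refine ⟨N, hN1, (ε' : A), ?_, hspan, ?_⟩
  · have := congrArg (Subtype.val) hidem'
    push_cast at this
    exact this
  · intro m hm
    have := congrArg (Subtype.val) (hpow' m hm)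
    push_cast at this
    exact this

/-- A finite-dimensional φ-stable subalgebra containing a given element. -/
lemma stable_subalgebra {K A : Type*} [Field K] [Ring A] [Algebra K A] (φ : A →ₐ[K] A)
    (hKC : ∀ s : Finset A, FiniteDimensional K (Algebra.adjoin K (s : Set A))) (y : A)
    (hLF : FiniteDimensional K (Submodule.span K (Set.range fun i : ℕ => (⇑φ)^[i] y))) :
    ∃ C : Subalgebra K A, FiniteDimensional K C ∧ y ∈ C ∧ ∀ x ∈ C, φ x ∈ C := by
  set W := Submodule.span K (Set.range fun i : ℕ => (⇑φ)^[i] y) with hWdef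
  obtain ⟨s, hs⟩ : W.FG := Module.Finite.iff_fg.mp hLF
  have hφW : ∀ w ∈ W, φ w ∈ W := by
    intro w hw
    have hmap : Submodule.map φ.toLinearMap W ≤ W := by
      rw [hWdef, Submodule.map_span]
      refine Submodule.span_le.mpr ?_
      rintro z ⟨u, ⟨i, rfl⟩, rfl⟩
      exact Submodule.subset_span ⟨i + 1, Function.iterate_succ_apply' (⇑φ) i y⟩
    exact hmap ⟨w, hw, rfl⟩
  refine ⟨Algebra.adjoin K (s : Set A), hKC s, ?_, ?_⟩
  · have hyW : y ∈ W := Submodule.subset_span ⟨0, rfl⟩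
    rw [← hs] at hyW
    exact Algebra.span_le_adjoin K _ hyW
  · intro x hx
    have hst : (Algebra.adjoin K (s : Set A)).map φ ≤ Algebra.adjoin K (s : Set A) := by
      rw [AlgHom.map_adjoin]
      refine Algebra.adjoin_le ?_
      rintro z ⟨w, hw, rfl⟩
      have hwW : w ∈ W := hs ▸ Submodule.subset_span hw
      have hφw : φ w ∈ W := hφW w hwW
      rw [← hs] at hφw
      exact Algebra.span_le_adjoin K _ hφw
    exact hst ⟨x, hx, rfl⟩

/-- A K-subspace `V` of `A` is a Mathieu subspace of `A` if for all `a b c : A` such that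
`a ^ m ∈ V` for all `m ≥ 1`, there exists `N ≥ 1` such that `b * a ^ m * c ∈ V` for all
`m ≥ N`. -/
def IsMathieuSubspace {K : Type*} [Field K] {A : Type*} [Ring A] [Algebra K A]
    (V : Submodule K A) : Prop :=
  ∀ a b c : A, (∀ m : ℕ, 1 ≤ m → a ^ m ∈ V) →
    ∃ N : ℕ, 1 ≤ N ∧ ∀ m : ℕ, N ≤ m → b * a ^ m * c ∈ V

/-- If φ is a locally finite surjective K-algebra endomorphism of A (with A
satisfying (KC)), then the image of I − φ is a Mathieu subspace of A. -/
theorem lfed_surjective_endomorphism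
    (K : Type*) [Field K] [CharZero K]
    (A : Type*) [Ring A] [Algebra K A]
    (hKC : ∀ s : Finset A, FiniteDimensional K (Algebra.adjoin K (s : Set A)))
    (φ : A →ₐ[K] A) (hsurj : Function.Surjective φ)
    (hLF : ∀ a : A,
      FiniteDimensional K (Submodule.span K (Set.range fun i : ℕ => (⇑φ)^[i] a))) :
    IsMathieuSubspace
      (LinearMap.range (LinearMap.id - φ.toLinearMap : A →ₗ[K] A)) := by
  intro a b c ha
  set V := LinearMap.range (LinearMap.id - φ.toLinearMap : A →ₗ[K] A) with hVdef
  have hfd : FiniteDimensional K (Algebra.adjoin K ({a} : Set A)) := by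
    have := hKC {a}
    rwa [Finset.coe_singleton] at this
  obtain ⟨d, hd1, ε, hidem, hspan, hpow⟩ := idem_from_powers a hfd
  have hεV : ε ∈ V := by
    refine Submodule.span_le.mpr ?_ hspan
    rintro x ⟨m, hm1, rfl⟩
    exact ha m hm1
  obtain ⟨y, hy⟩ := hεV
  have hyφ : y - φ y = ε := by simpa [LinearMap.sub_apply] using hy
  obtain ⟨C, hCfd, hyC, hCst⟩ := stable_subalgebra φ hKC y (hLF y)
  haveI := hCfd
  set ψ : C →ₐ[K] C := AlgHom.codRestrict (φ.comp C.val) C (fun x => hCst x x.2) with hψdef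
  have hψcoe : ∀ z : C, (ψ z : A) = φ (z : A) := fun z => rfl
  set y' : C := ⟨y, hyC⟩ with hy'def
  have hey : ((y' - ψ y' : C) : A) = ε := by
    rw [AddSubgroupClass.coe_sub, hψcoe]
    exact hyφ
  have he' : (y' - ψ y') * (y' - ψ y') = y' - ψ y' := by
    apply Subtype.ext
    push_cast [hey]
    exact hidem
  obtain ⟨N, hN⟩ := idem_image_nilpotent ψ y' he'
  have hcoeit : ∀ (n : ℕ) (z : C), ((ψ^[n] z : C) : A) = (⇑φ)^[n] (z : A) := by
    intro n
    induction n with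
    | zero => intro z; rfl
    | succ n ih =>
        intro z
        rw [Function.iterate_succ_apply', Function.iterate_succ_apply', hψcoe, ih]
  have hNA : (⇑φ)^[N] ε = 0 := by
    rw [← hey, ← hcoeit, hN]
    rfl
  have htel : ∀ (x : A) (n : ℕ), x - (⇑φ)^[n] x ∈ V := by
    intro x n
    induction n with
    | zero => simp
    | succ n ih =>
        have h2 : (⇑φ)^[n] x - φ ((⇑φ)^[n] x) ∈ V :=
          ⟨(⇑φ)^[n] x, by simp [LinearMap.sub_apply]⟩
        have h3 : x - (⇑φ)^[n + 1] x =
            (x - (⇑φ)^[n] x) + ((⇑φ)^[n] x - φ ((⇑φ)^[n] x)) := by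
          rw [Function.iterate_succ_apply']
          abel
        rw [h3]
        exact V.add_mem ih h2
  refine ⟨max d 1, le_max_right _ _, fun m hm => ?_⟩
  have hdm : d ≤ m := le_trans (le_max_left d 1) hm
  have hx0 : (⇑φ)^[N] (b * a ^ m * c) = 0 := by
    rw [hpow m hdm, iterate_map_mul, iterate_map_mul, iterate_map_mul, hNA]
    simp
  have := htel (b * a ^ m * c) N
  rwa [hx0, sub_zero] at this
end

section
/- Let K be a field of characteristic zero and A a unital K-algebra such that every K-subalgebra of A generated by finitely many elements is finite dimensional over K. If φ is a K-algebra automorphism of A of finite order (i.e., φ^n = I for some n ≥ 1), then for every K-subspace V of A, the image (I − φ)(V) is a Mathieu subspace of A. -/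
open LinearMap Module Set

lemma aux_trace_pow_of_nilpotent_sub {F V : Type*} [Field F] [AddCommGroup V] [Module F V]
    [FiniteDimensional F V] (g : Module.End F V) (μ : F)
    (h : IsNilpotent (g - algebraMap F (Module.End F V) μ)) (m : ℕ) :
    trace F V (g ^ m) = μ ^ m * (finrank F V : F) := by
  have hcomm : Commute g (algebraMap F (Module.End F V) μ) := (Algebra.commutes μ g).symm
  have hfac : (∑ i ∈ Finset.range m, g ^ i * (algebraMap F (Module.End F V) μ) ^ (m - 1 - i)) *
      (g - algebraMap F (Module.End F V) μ) = g ^ m - (algebraMap F (Module.End F V) μ) ^ m :=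
    hcomm.geom_sum₂_mul m
  have hnil : IsNilpotent (g ^ m - (algebraMap F (Module.End F V) μ) ^ m) := by
    rw [← hfac]
    refine Commute.isNilpotent_mul_left ?_ h
    refine Commute.sum_left _ _ _ fun i _ => Commute.mul_left ?_ ?_
    · exact ((Commute.refl g).sub_right hcomm).pow_left i
    · exact ((hcomm.symm).sub_right (Commute.refl _)).pow_left _
  have := (LinearMap.isNilpotent_trace_of_isNilpotent hnil).eq_zero
  rw [map_sub, sub_eq_zero] at this
  rw [this, ← map_pow, Module.algebraMap_end_eq_smul_id, map_smul, trace_id, smul_eq_mul]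

lemma aux_isNilpotent_of_trace_pow_algClosed {F V : Type*} [Field F] [CharZero F] [IsAlgClosed F]
    [AddCommGroup V] [Module F V] [FiniteDimensional F V] (f : Module.End F V)
    (h : ∀ m : ℕ, 1 ≤ m → trace F V (f ^ m) = 0) : IsNilpotent f := by
  classical
  have hds := DirectSum.isInternal_submodule_of_iSupIndep_of_iSup_eq_top
    f.independent_maxGenEigenspace f.iSup_maxGenEigenspace_eq_top
  have hfin : {μ | f.maxGenEigenspace μ ≠ ⊥}.Finite :=
    WellFoundedGT.finite_ne_bot_of_iSupIndep f.independent_maxGenEigenspace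
  have hMap : ∀ (m : ℕ) (μ : F), MapsTo (f ^ m) (f.maxGenEigenspace μ) (f.maxGenEigenspace μ) :=
    fun m μ => Module.End.mapsTo_maxGenEigenspace_of_comm ((Commute.refl f).pow_right m) μ
  have hMap1 : ∀ μ : F, MapsTo f (f.maxGenEigenspace μ) (f.maxGenEigenspace μ) :=
    fun μ => Module.End.mapsTo_maxGenEigenspace_of_comm rfl μ
  set s := hfin.toFinset with hs
  -- trace identity
  have key : ∀ m : ℕ, 1 ≤ m → ∑ μ ∈ s, μ ^ m * (finrank F (f.maxGenEigenspace μ) : F) = 0 := by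
    intro m hm
    rw [← h m hm, trace_eq_sum_trace_restrict' hds hfin (hMap m)]
    refine (Finset.sum_congr rfl fun μ _ => ?_).symm
    have h1 : (f ^ m).restrict (hMap m μ) = (f.restrict (hMap1 μ)) ^ m := by
      rw [Module.End.pow_restrict m (fun x hx => hMap1 μ hx)]
    rw [h1]
    refine aux_trace_pow_of_nilpotent_sub _ μ ?_ m
    have h2 : f.restrict (hMap1 μ) - algebraMap F (Module.End F (f.maxGenEigenspace μ)) μ
        = (f - algebraMap F (Module.End F V) μ).restrict
          (Module.End.mapsTo_maxGenEigenspace_of_comm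
            (Algebra.mul_sub_algebraMap_commutes f μ) μ) := by
      ext x
      simp [LinearMap.restrict_apply, Module.algebraMap_end_eq_smul_id]
      rfl
    rw [h2]
    exact f.isNilpotent_restrict_maxGenEigenspace_sub_algebraMap μ
  -- every eigenvalue is zero
  have hzero : ∀ μ ∈ s, μ = 0 := by
    intro μ0 hμ0
    by_contra hne
    set p : Polynomial F := ∏ ν ∈ s.erase μ0, (Polynomial.X - Polynomial.C ν) with hp
    have hsum : ∑ μ ∈ s, (finrank F (f.maxGenEigenspace μ) : F) * (μ * p.eval μ) = 0 := by
      have : ∀ μ : F, μ * p.eval μ =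
          ∑ j ∈ Finset.range (p.natDegree + 1), p.coeff j * μ ^ (j + 1) := by
        intro μ
        rw [Polynomial.eval_eq_sum_range, Finset.mul_sum]
        exact Finset.sum_congr rfl fun j _ => by ring
      simp_rw [this, Finset.mul_sum]
      rw [Finset.sum_comm]
      refine Finset.sum_eq_zero fun j _ => ?_
      have := key (j + 1) (Nat.le_add_left 1 j)
      calc ∑ μ ∈ s, (finrank F (f.maxGenEigenspace μ) : F) * (p.coeff j * μ ^ (j + 1))
          = p.coeff j * ∑ μ ∈ s, μ ^ (j + 1) * (finrank F (f.maxGenEigenspace μ) : F) := by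
            rw [Finset.mul_sum]; exact Finset.sum_congr rfl fun μ _ => by ring
        _ = 0 := by rw [this, mul_zero]
    rw [Finset.sum_eq_single μ0 (fun ν hν hne' => ?_) (fun habs => absurd hμ0 habs)] at hsum
    · -- the μ0 term is nonzero : contradiction
      have hp0 : p.eval μ0 ≠ 0 := by
        rw [hp, Polynomial.eval_prod]
        refine Finset.prod_ne_zero_iff.mpr fun ν hν => ?_
        simp only [Polynomial.eval_sub, Polynomial.eval_X, Polynomial.eval_C, sub_ne_zero]
        exact fun hEq => (Finset.mem_erase.mp hν).1 hEq.symm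
      have hd : (finrank F (f.maxGenEigenspace μ0) : F) ≠ 0 := by
        have : f.maxGenEigenspace μ0 ≠ ⊥ := by simpa [hs] using hμ0
        have : 0 < finrank F (f.maxGenEigenspace μ0) :=
          Module.finrank_pos_iff.mpr (Submodule.nontrivial_iff_ne_bot.mpr this)
        exact_mod_cast this.ne'
      exact (mul_ne_zero hd (mul_ne_zero hne hp0)) hsum
    · -- terms for ν ≠ μ0 vanish since p.eval ν = 0
      have : p.eval ν = 0 := by
        rw [hp, Polynomial.eval_prod]
        refine Finset.prod_eq_zero (Finset.mem_erase.mpr ⟨hne', hν⟩) ?_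
        simp
      rw [this, mul_zero, mul_zero]
  -- conclusion: f is nilpotent
  have htop : ∀ v : V, v ∈ f.maxGenEigenspace 0 := by
    intro v
    have hv : v ∈ ⨆ μ, f.maxGenEigenspace μ := f.iSup_maxGenEigenspace_eq_top ▸ Submodule.mem_top
    have hle : (⨆ μ, f.maxGenEigenspace μ) ≤ f.maxGenEigenspace 0 := by
      refine iSup_le fun μ => ?_
      by_cases hμ : f.maxGenEigenspace μ = ⊥
      · rw [hμ]; exact bot_le
      · have : μ ∈ s := by simpa [hs] using hμ
        rw [hzero μ this]
    exact hle hv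
  have h3 : ∀ v : V, ∃ k : ℕ, (f ^ k) v = 0 := by
    intro v
    obtain ⟨k, hk⟩ := (Module.End.mem_maxGenEigenspace f 0 v).mp (htop v)
    exact ⟨k, by simpa using hk⟩
  rw [LinearMap.isNilpotent_iff_charpoly, LinearMap.charpoly_eq_X_pow_iff]
  exact h3

lemma aux_isNilpotent_of_trace_pow {K V : Type*} [Field K] [CharZero K] [AddCommGroup V]
    [Module K V] [FiniteDimensional K V] (f : Module.End K V)
    (h : ∀ m : ℕ, 1 ≤ m → trace K V (f ^ m) = 0) : IsNilpotent f := by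
  classical
  set F := AlgebraicClosure K
  have hinj : Function.Injective (algebraMap K F) := (algebraMap K F).injective
  have : CharZero F := charZero_of_injective_algebraMap hinj
  set b := Module.finBasis K V with hb
  set n := finrank K V
  set M : Matrix (Fin n) (Fin n) K := LinearMap.toMatrix b b f with hM
  have hMt : ∀ m : ℕ, 1 ≤ m → (M ^ m).trace = 0 := by
    intro m hm
    have h1 : M ^ m = LinearMap.toMatrix b b (f ^ m) := LinearMap.toMatrix_pow b f m
    rw [h1, ← LinearMap.trace_eq_matrix_trace, h m hm]
  set N : Matrix (Fin n) (Fin n) F := M.map (algebraMap K F) with hN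
  have hNpow : ∀ m : ℕ, N ^ m = (M ^ m).map (algebraMap K F) := by
    intro m
    have : N = (algebraMap K F).mapMatrix M := rfl
    rw [this, ← map_pow]
    rfl
  have hNnil : IsNilpotent N := by
    have hg := aux_isNilpotent_of_trace_pow_algClosed (Matrix.toLinAlgEquiv' N) ?_
    · obtain ⟨k, hk⟩ := hg
      refine ⟨k, ?_⟩
      have : Matrix.toLinAlgEquiv' (N ^ k) = 0 := by rw [map_pow, hk]
      simpa using congrArg Matrix.toLinAlgEquiv'.symm this
    · intro m hm
      rw [← map_pow, LinearMap.trace_eq_matrix_trace F (Pi.basisFun F (Fin n)),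
        LinearMap.toMatrix_eq_toMatrix']
      have : LinearMap.toMatrix' ((Matrix.toLinAlgEquiv' (N ^ m)) : (Fin n → F) →ₗ[F] Fin n → F)
          = N ^ m := LinearMap.toMatrixAlgEquiv'_toLinAlgEquiv' (N ^ m)
      rw [this, hNpow]
      have : ((M ^ m).map (algebraMap K F)).trace = algebraMap K F ((M ^ m).trace) := by
        simp [Matrix.trace, Matrix.map_apply, map_sum]
      rw [this, hMt m hm, map_zero]
  obtain ⟨k, hk⟩ := hNnil
  have hMk : M ^ k = 0 := by
    rw [hNpow] at hk
    ext i j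
    have := congrFun (congrFun hk i) j
    simpa [Matrix.map_apply] using hinj (by simpa using this)
  refine ⟨k, ?_⟩
  have : LinearMap.toMatrix b b (f ^ k) = 0 := by
    rw [← LinearMap.toMatrix_pow b f k]
    exact hMk
  have := congrArg (Matrix.toLin b b) this
  rwa [Matrix.toLin_toMatrix, map_zero] at this

/-- Let K be a field of characteristic zero and A a unital K-algebra
satisfying (KC). If φ is a K-algebra automorphism of A of finite order, then for every
K-subspace V of A, the image (I − φ)(V) is a Mathieu subspace of A. -/
theorem finite_order_automorphism_maps_subspaces_to_MS
    (K : Type*) [Field K] [CharZero K]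
    (A : Type*) [Ring A] [Algebra K A]
    (hKC : ∀ s : Finset A, FiniteDimensional K (Algebra.adjoin K (s : Set A)))
    (φ : A ≃ₐ[K] A) (hfin : ∃ n : ℕ, 1 ≤ n ∧ φ ^ n = 1)
    (V : Submodule K A) :
    IsMathieuSubspace
      (Submodule.map (LinearMap.id - φ.toLinearMap : A →ₗ[K] A) V) := by

  classical
  obtain ⟨n, hn1, hn⟩ := hfin
  intro a b c ha
  suffices hnil : IsNilpotent a by
    obtain ⟨k, hk⟩ := hnil
    refine ⟨k + 1, Nat.le_add_left 1 k, fun m hm => ?_⟩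
    have hz : a ^ m = 0 := pow_eq_zero_of_le (Nat.le_of_succ_le hm) hk
    rw [hz, mul_zero, zero_mul]
    exact Submodule.zero_mem _
  -- the finite-dimensional φ-invariant subalgebra containing a
  set s : Finset A := (Finset.range n).image (fun i => (φ ^ i) a) with hsdef
  set B := Algebra.adjoin K (s : Set A) with hBdef
  haveI : FiniteDimensional K B := hKC s
  have hgen : ∀ i : ℕ, i < n → (φ ^ i) a ∈ B := by
    intro i hi
    exact Algebra.subset_adjoin (by
      simp only [hsdef, Finset.coe_image, Finset.coe_range, Set.mem_image, Set.mem_Iio]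
      exact ⟨i, hi, rfl⟩)
  have haB : a ∈ B := by simpa using hgen 0 hn1
  have hφB : ∀ x ∈ B, φ x ∈ B := by
    intro x hx
    induction hx using Algebra.adjoin_induction with
    | mem x hx =>
      obtain ⟨i, hi, rfl⟩ : ∃ i, i < n ∧ (φ ^ i) a = x := by
        simpa [hsdef, Finset.mem_image, Finset.mem_range] using hx
      have hstep : φ ((φ ^ i) a) = (φ ^ (i + 1)) a := by
        rw [pow_succ']; rfl
      rw [hstep]
      rcases Nat.lt_or_ge (i + 1) n with h | h
      · exact hgen (i + 1) h
      · have hin : i + 1 = n := by omega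
        rw [hin, hn]
        simpa using haB
    | algebraMap r => simpa [AlgEquiv.commutes] using Subalgebra.algebraMap_mem B r
    | add x y hx hy ihx ihy => rw [map_add]; exact Subalgebra.add_mem B ihx ihy
    | mul x y hx hy ihx ihy => rw [map_mul]; exact Subalgebra.mul_mem B ihx ihy
  have hφpowB : ∀ (i : ℕ), ∀ x ∈ B, (φ ^ i) x ∈ B := by
    intro i
    induction i with
    | zero => intro x hx; simpa using hx
    | succ i ih =>
      intro x hx
      have : (φ ^ (i + 1)) x = φ ((φ ^ i) x) := by rw [pow_succ']; rfl
      rw [this]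
      exact hφB _ (ih x hx)
  have hφsymmB : ∀ x ∈ B, φ.symm x ∈ B := by
    intro x hx
    have h1 : φ ((φ ^ (n - 1)) x) = x := by
      have h2 : φ * φ ^ (n - 1) = φ ^ n := by
        rw [← pow_succ']
        congr 1
        omega
      have : (φ * φ ^ (n - 1)) x = x := by rw [h2, hn]; rfl
      exact this
    have : φ.symm x = (φ ^ (n - 1)) x := by
      apply φ.injective
      rw [AlgEquiv.apply_symm_apply, h1]
    rw [this]
    exact hφpowB (n - 1) x hx
  -- telescoping sum
  have hsum : ∀ m : ℕ, 1 ≤ m → ∑ i ∈ Finset.range n, (φ ^ i) (a ^ m) = 0 := by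
    intro m hm
    obtain ⟨v, hv, hva⟩ := ha m hm
    have hva' : v - φ v = a ^ m := by
      simpa [LinearMap.sub_apply] using hva
    have hterm : ∀ i : ℕ, (φ ^ i) (a ^ m) = (φ ^ i) v - (φ ^ (i + 1)) v := by
      intro i
      rw [← hva', map_sub]
      congr 1
    rw [Finset.sum_congr rfl fun i _ => hterm i, Finset.sum_range_sub' (fun i => (φ ^ i) v)]
    simp [hn]
  -- move everything into B
  set e : B →ₐ[K] B := (φ.toAlgHom.comp B.val).codRestrict B (fun x => hφB x x.2) with hedef
  set e' : B →ₐ[K] B := (φ.symm.toAlgHom.comp B.val).codRestrict B (fun x => hφsymmB x x.2)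
    with he'def
  have hecoe : ∀ x : B, (e x : A) = φ (x : A) := fun x => rfl
  have he'coe : ∀ x : B, (e' x : A) = φ.symm (x : A) := fun x => rfl
  have hepow : ∀ (i : ℕ) (x : B), ((e ^ i) x : A) = (φ ^ i) (x : A) := by
    intro i
    induction i with
    | zero => intro x; rfl
    | succ i ih =>
      intro x
      have h1 : (e ^ (i + 1)) x = e ((e ^ i) x) := by rw [pow_succ']; rfl
      have h2 : (φ ^ (i + 1)) (x : A) = φ ((φ ^ i) (x : A)) := by rw [pow_succ']; rfl
      rw [h1, h2, hecoe, ih]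
  have hee' : ∀ y : B, e (e' y) = y := fun y => Subtype.ext (by
    rw [hecoe, he'coe]; exact φ.apply_symm_apply _)
  have he'e : ∀ y : B, e' (e y) = y := fun y => Subtype.ext (by
    rw [he'coe, hecoe]; exact φ.symm_apply_apply _)
  set E : B ≃ₐ[K] B := AlgEquiv.ofAlgHom e e' (AlgHom.ext hee') (AlgHom.ext he'e) with hEdef
  have hEapp : ∀ x : B, E x = e x := fun _ => rfl
  have hEsymm : ∀ x : B, E.symm x = e' x := fun _ => rfl
  have lapp : ∀ u v : B, Algebra.lmul K B u v = u * v := fun u v => rfl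
  -- the trace functional
  set T : B →ₗ[K] K := (LinearMap.trace K B) ∘ₗ (Algebra.lmul K B).toLinearMap with hTdef
  have hTconj : ∀ x : B, T (e x) = T x := by
    intro x
    have heq : Algebra.lmul K B (e x) =
        E.toLinearEquiv.conj (Algebra.lmul K B x) := by
      ext y
      rw [LinearEquiv.conj_apply]
      simp only [LinearMap.comp_apply, LinearEquiv.coe_coe, AlgEquiv.toLinearEquiv_apply]
      rw [lapp, lapp, map_mul, hEapp, ← AlgEquiv.toLinearEquiv_symm]
      have h5 : E (E.symm.toLinearEquiv y) = y := E.apply_symm_apply y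
      rw [h5]
    rw [hTdef]
    simp only [LinearMap.comp_apply, AlgHom.toLinearMap_apply]
    rw [heq, LinearMap.trace_conj']
  have hTpowconj : ∀ (i : ℕ) (x : B), T ((e ^ i) x) = T x := by
    intro i
    induction i with
    | zero => intro x; rfl
    | succ i ih =>
      intro x
      have h1 : (e ^ (i + 1)) x = e ((e ^ i) x) := by rw [pow_succ']; rfl
      rw [h1, hTconj, ih]
  -- a as an element of B
  set a' : B := ⟨a, haB⟩ with ha'def
  have ha'pow : ∀ m : ℕ, ((a' ^ m : B) : A) = a ^ m := fun m => by
    rw [ha'def]; exact SubmonoidClass.coe_pow _ m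
  have hTzero : ∀ m : ℕ, 1 ≤ m → T (a' ^ m) = 0 := by
    intro m hm
    have hsB : ∑ i ∈ Finset.range n, (e ^ i) (a' ^ m) = 0 := by
      refine Subtype.ext ?_
      push_cast
      rw [Finset.sum_congr rfl fun i _ => by rw [hepow i (a' ^ m), ha'pow]]
      exact hsum m hm
    have := congrArg T hsB
    rw [map_sum, map_zero] at this
    rw [Finset.sum_congr rfl (fun i _ => hTpowconj i (a' ^ m))] at this
    rw [Finset.sum_const, Finset.card_range, nsmul_eq_mul] at this
    have hne : (n : K) ≠ 0 := Nat.cast_ne_zero.mpr (by omega)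
    exact (mul_eq_zero.mp this).resolve_left hne
  -- nilpotency via trace of powers
  have hLnil : IsNilpotent (Algebra.lmul K B a') := by
    refine aux_isNilpotent_of_trace_pow _ (fun m hm => ?_)
    rw [← map_pow]
    exact hTzero m hm
  obtain ⟨k, hk⟩ := hLnil
  have hka : a' ^ k = 0 := by
    apply Algebra.lmul_injective (R := K)
    rw [map_pow, hk, map_zero]
  exact ⟨k, by simpa [ha'pow] using congrArg (Subtype.val) hka⟩
end
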